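/- For every k ∈ ℕ, the piecewise-defined function ψ_k : ℝ → ℝ given by ψ_k(s) = 0 for s ≤ 1/k; ψ_k(s) = (8k²/9)(s - 1/k)³ for 1/k < s ≤ 5/(4k); ψ_k(s) = (2k/3)(s - 5/(4k))² + (1/6)(s - 5/(4k)) + 1/(72k) for 5/(4k) < s ≤ 7/(4k); ψ_k(s) = -(8k²/9)(s - 2/k)³ + s - 3/(2k) for 7/(4k) < s ≤ 2/k; and ψ_k(s) = s - 3/(2k) for s > 2/k, is C² on ℝ, and satisfies the pointwise bound |ψ_k(s)| · |ψ_k''(s)| ≤ (1/(2k)) · (4k/3) · 1_{[1/k, 2/k]}(s) ≤ 1_{[1/k, 2/k]}(s) for all s ∈ ℝ. -/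

import Mathlib

open Set

noncomputable section

/-- The penalization function `ψ_k` from the penalized approximation
(equation (5.2) of the paper). -/
def psiPen (k : ℕ) (s : ℝ) : ℝ :=
  if s ≤ 1 / (k : ℝ) then 0
  else if s ≤ 5 / (4 * (k : ℝ)) then (8 * (k : ℝ) ^ 2 / 9) * (s - 1 / (k : ℝ)) ^ 3
  else if s ≤ 7 / (4 * (k : ℝ)) then
    (2 * (k : ℝ) / 3) * (s - 5 / (4 * (k : ℝ))) ^ 2
      + (1 / 6) * (s - 5 / (4 * (k : ℝ))) + 1 / (72 * (k : ℝ))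
  else if s ≤ 2 / (k : ℝ) then
    -(8 * (k : ℝ) ^ 2 / 9) * (s - 2 / (k : ℝ)) ^ 3 + s - 3 / (2 * (k : ℝ))
  else s - 3 / (2 * (k : ℝ))

namespace Stmt12

/-- generic 5-piece function with the junction points of `psiPen`. -/
def pcw (k : ℕ) (f0 f1 f2 f3 f4 : ℝ → ℝ) (s : ℝ) : ℝ :=
  if s ≤ 1 / (k : ℝ) then f0 s
  else if s ≤ 5 / (4 * (k : ℝ)) then f1 s
  else if s ≤ 7 / (4 * (k : ℝ)) then f2 s
  else if s ≤ 2 / (k : ℝ) then f3 s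
  else f4 s

variable {k : ℕ}

lemma hKpos (hk : 0 < k) : (0:ℝ) < (k:ℝ) := by exact_mod_cast hk

lemma h12 (hk : 0 < k) : 1 / (k:ℝ) < 5 / (4 * (k:ℝ)) := by
  have hK := hKpos hk
  rw [div_lt_div_iff₀ hK (by positivity)]; nlinarith

lemma h23 (hk : 0 < k) : 5 / (4 * (k:ℝ)) < 7 / (4 * (k:ℝ)) := by
  have hK := hKpos hk
  gcongr
  norm_num

lemma h34 (hk : 0 < k) : 7 / (4 * (k:ℝ)) < 2 / (k:ℝ) := by
  have hK := hKpos hk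
  rw [div_lt_div_iff₀ (by positivity) hK]; nlinarith

section eqOn
variable {f0 f1 f2 f3 f4 : ℝ → ℝ}

lemma pcw_eq0 : ∀ x ∈ Iic (1 / (k:ℝ)), pcw k f0 f1 f2 f3 f4 x = f0 x := by
  intro x hx; simp only [pcw, if_pos (mem_Iic.mp hx)]

lemma pcw_eq1 (e01 : f0 (1 / (k:ℝ)) = f1 (1 / (k:ℝ))) :
    ∀ x ∈ Icc (1 / (k:ℝ)) (5 / (4 * (k:ℝ))), pcw k f0 f1 f2 f3 f4 x = f1 x := by
  rintro x ⟨hx1, hx2⟩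
  rcases eq_or_lt_of_le hx1 with h | h
  · rw [pcw, if_pos (le_of_eq h.symm), ← h, e01]
  · rw [pcw, if_neg (not_le.mpr h), if_pos hx2]

lemma pcw_eq2 (hk : 0 < k) (e12 : f1 (5 / (4 * (k:ℝ))) = f2 (5 / (4 * (k:ℝ)))) :
    ∀ x ∈ Icc (5 / (4 * (k:ℝ))) (7 / (4 * (k:ℝ))), pcw k f0 f1 f2 f3 f4 x = f2 x := by
  rintro x ⟨hx1, hx2⟩
  have h0 : ¬ x ≤ 1 / (k:ℝ) := not_le.mpr (lt_of_lt_of_le (h12 hk) hx1)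
  rcases eq_or_lt_of_le hx1 with h | h
  · rw [pcw, if_neg h0, if_pos (le_of_eq h.symm), ← h, e12]
  · rw [pcw, if_neg h0, if_neg (not_le.mpr h), if_pos hx2]

lemma pcw_eq3 (hk : 0 < k) (e23 : f2 (7 / (4 * (k:ℝ))) = f3 (7 / (4 * (k:ℝ)))) :
    ∀ x ∈ Icc (7 / (4 * (k:ℝ))) (2 / (k:ℝ)), pcw k f0 f1 f2 f3 f4 x = f3 x := by
  rintro x ⟨hx1, hx2⟩
  have h0 : ¬ x ≤ 1 / (k:ℝ) :=
    not_le.mpr (lt_of_lt_of_le ((h12 hk).trans (h23 hk)) hx1)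
  have h1 : ¬ x ≤ 5 / (4 * (k:ℝ)) := not_le.mpr (lt_of_lt_of_le (h23 hk) hx1)
  rcases eq_or_lt_of_le hx1 with h | h
  · rw [pcw, if_neg h0, if_neg h1, if_pos (le_of_eq h.symm), ← h, e23]
  · rw [pcw, if_neg h0, if_neg h1, if_neg (not_le.mpr h), if_pos hx2]

lemma pcw_eq4 (hk : 0 < k) (e34 : f3 (2 / (k:ℝ)) = f4 (2 / (k:ℝ))) :
    ∀ x ∈ Ici (2 / (k:ℝ)), pcw k f0 f1 f2 f3 f4 x = f4 x := by
  intro x hx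
  have hx1 : 2 / (k:ℝ) ≤ x := mem_Ici.mp hx
  have h0 : ¬ x ≤ 1 / (k:ℝ) :=
    not_le.mpr (lt_of_lt_of_le (((h12 hk).trans (h23 hk)).trans (h34 hk)) hx1)
  have h1 : ¬ x ≤ 5 / (4 * (k:ℝ)) :=
    not_le.mpr (lt_of_lt_of_le ((h23 hk).trans (h34 hk)) hx1)
  have h2 : ¬ x ≤ 7 / (4 * (k:ℝ)) := not_le.mpr (lt_of_lt_of_le (h34 hk) hx1)
  rcases eq_or_lt_of_le hx1 with h | h
  · rw [pcw, if_neg h0, if_neg h1, if_neg h2, if_pos (le_of_eq h.symm), ← h, e34]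
  · rw [pcw, if_neg h0, if_neg h1, if_neg h2, if_neg (not_le.mpr h)]

end eqOn

/-- glue lemma for derivatives at a junction point. -/
lemma hasDerivAt_glue {f F G : ℝ → ℝ} {b a c d : ℝ} (hb : b < a) (hc : a < c)
    (hF : ∀ x ∈ Icc b a, f x = F x) (hG : ∀ x ∈ Icc a c, f x = G x)
    (hF' : HasDerivAt F d a) (hG' : HasDerivAt G d a) : HasDerivAt f d a := by
  have h1 : HasDerivWithinAt f d (Iic a) a := by
    refine hF'.hasDerivWithinAt.congr_of_eventuallyEq ?_ (hF a ⟨hb.le, le_rfl⟩)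
    filter_upwards [mem_nhdsWithin_of_mem_nhds (Ioi_mem_nhds hb), self_mem_nhdsWithin]
      with x hx1 hx2
    exact hF x ⟨le_of_lt hx1, hx2⟩
  have h2 : HasDerivWithinAt f d (Ici a) a := by
    refine hG'.hasDerivWithinAt.congr_of_eventuallyEq ?_ (hG a ⟨le_rfl, hc.le⟩)
    filter_upwards [mem_nhdsWithin_of_mem_nhds (Iio_mem_nhds hc), self_mem_nhdsWithin]
      with x hx1 hx2
    exact hG x ⟨hx2, le_of_lt hx1⟩
  have h3 := h1.union h2
  rw [Iic_union_Ici] at h3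
  exact hasDerivWithinAt_univ.mp h3

lemma hasDerivAt_of_eqOn_Icc {f g : ℝ → ℝ} {b c s d : ℝ} (hb : b < s) (hc : s < c)
    (heq : ∀ x ∈ Icc b c, f x = g x) (hg : HasDerivAt g d s) : HasDerivAt f d s := by
  refine hg.congr_of_eventuallyEq ?_
  filter_upwards [Icc_mem_nhds hb hc] with x hx
  exact heq x hx

lemma continuousAt_glue {f F G : ℝ → ℝ} {b a c : ℝ} (hb : b < a) (hc : a < c)
    (hF : ∀ x ∈ Icc b a, f x = F x) (hG : ∀ x ∈ Icc a c, f x = G x)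
    (cF : ContinuousAt F a) (cG : ContinuousAt G a) : ContinuousAt f a := by
  have h1 : ContinuousWithinAt f (Iic a) a := by
    refine cF.continuousWithinAt.congr_of_eventuallyEq ?_ (hF a ⟨hb.le, le_rfl⟩)
    filter_upwards [mem_nhdsWithin_of_mem_nhds (Ioi_mem_nhds hb), self_mem_nhdsWithin]
      with x hx1 hx2
    exact hF x ⟨le_of_lt hx1, hx2⟩
  have h2 : ContinuousWithinAt f (Ici a) a := by
    refine cG.continuousWithinAt.congr_of_eventuallyEq ?_ (hG a ⟨le_rfl, hc.le⟩)
    filter_upwards [mem_nhdsWithin_of_mem_nhds (Iio_mem_nhds hc), self_mem_nhdsWithin]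
      with x hx1 hx2
    exact hG x ⟨hx2, le_of_lt hx1⟩
  have h3 := h1.union h2
  rw [Iic_union_Ici] at h3
  exact (continuousWithinAt_univ f a).mp h3

section generic
variable {f0 f1 f2 f3 f4 g0 g1 g2 g3 g4 : ℝ → ℝ}

/-- Generic: piecewise function of matching `C¹` pieces is differentiable with
piecewise derivative. -/
lemma pcw_hasDerivAt (hk : 0 < k)
    (e01 : f0 (1 / (k:ℝ)) = f1 (1 / (k:ℝ)))
    (e12 : f1 (5 / (4 * (k:ℝ))) = f2 (5 / (4 * (k:ℝ))))
    (e23 : f2 (7 / (4 * (k:ℝ))) = f3 (7 / (4 * (k:ℝ))))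
    (e34 : f3 (2 / (k:ℝ)) = f4 (2 / (k:ℝ)))
    (d01 : g0 (1 / (k:ℝ)) = g1 (1 / (k:ℝ)))
    (d12 : g1 (5 / (4 * (k:ℝ))) = g2 (5 / (4 * (k:ℝ))))
    (d23 : g2 (7 / (4 * (k:ℝ))) = g3 (7 / (4 * (k:ℝ))))
    (d34 : g3 (2 / (k:ℝ)) = g4 (2 / (k:ℝ)))
    (hd0 : ∀ s, HasDerivAt f0 (g0 s) s) (hd1 : ∀ s, HasDerivAt f1 (g1 s) s)
    (hd2 : ∀ s, HasDerivAt f2 (g2 s) s) (hd3 : ∀ s, HasDerivAt f3 (g3 s) s)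
    (hd4 : ∀ s, HasDerivAt f4 (g4 s) s) :
    ∀ s, HasDerivAt (pcw k f0 f1 f2 f3 f4) (pcw k g0 g1 g2 g3 g4 s) s := by
  intro s
  have E1 := pcw_eq1 (k := k) (f0 := f0) (f2 := f2) (f3 := f3) (f4 := f4) e01
  have E2 := pcw_eq2 (f0 := f0) (f3 := f3) (f4 := f4) hk e12
  have E3 := pcw_eq3 (f0 := f0) (f1 := f1) (f4 := f4) hk e23
  have E4 := pcw_eq4 (f0 := f0) (f1 := f1) (f2 := f2) hk e34
  have G1 := pcw_eq1 (k := k) (f0 := g0) (f1 := g1) (f2 := g2) (f3 := g3) (f4 := g4) d01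
  have G2 := pcw_eq2 (f0 := g0) (f1 := g1) (f2 := g2) (f3 := g3) (f4 := g4) hk d12
  have G3 := pcw_eq3 (f0 := g0) (f1 := g1) (f2 := g2) (f3 := g3) (f4 := g4) hk d23
  have G4 := pcw_eq4 (f0 := g0) (f1 := g1) (f2 := g2) (f3 := g3) (f4 := g4) hk d34
  rcases lt_trichotomy s (1 / (k:ℝ)) with h1 | h1 | h1
  · rw [pcw_eq0 (f0 := g0) (f1 := g1) (f2 := g2) (f3 := g3) (f4 := g4) s
      (mem_Iic.mpr h1.le)]
    refine (hd0 s).congr_of_eventuallyEq ?_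
    filter_upwards [Iio_mem_nhds h1] with x hx
    exact pcw_eq0 x (mem_Iic.mpr hx.le)
  · subst h1
    rw [pcw_eq0 (f0 := g0) (f1 := g1) (f2 := g2) (f3 := g3) (f4 := g4) _
      (mem_Iic.mpr le_rfl)]
    refine hasDerivAt_glue (b := 1 / (k:ℝ) - 1) (by linarith) (h12 hk)
      (fun x hx => pcw_eq0 x (mem_Iic.mpr (mem_Icc.mp hx).2)) E1 (hd0 _) ?_
    rw [d01]; exact hd1 _
  · rcases lt_trichotomy s (5 / (4 * (k:ℝ))) with h2 | h2 | h2
    · rw [G1 s (mem_Icc.mpr ⟨h1.le, h2.le⟩)]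
      exact hasDerivAt_of_eqOn_Icc h1 h2 E1 (hd1 s)
    · subst h2
      rw [G1 _ (mem_Icc.mpr ⟨h1.le, le_rfl⟩)]
      refine hasDerivAt_glue (h12 hk) (h23 hk) E1 E2 (hd1 _) ?_
      rw [d12]; exact hd2 _
    · rcases lt_trichotomy s (7 / (4 * (k:ℝ))) with h3 | h3 | h3
      · rw [G2 s (mem_Icc.mpr ⟨h2.le, h3.le⟩)]
        exact hasDerivAt_of_eqOn_Icc h2 h3 E2 (hd2 s)
      · subst h3
        rw [G2 _ (mem_Icc.mpr ⟨h2.le, le_rfl⟩)]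
        refine hasDerivAt_glue (h23 hk) (h34 hk) E2 E3 (hd2 _) ?_
        rw [d23]; exact hd3 _
      · rcases lt_trichotomy s (2 / (k:ℝ)) with h4 | h4 | h4
        · rw [G3 s (mem_Icc.mpr ⟨h3.le, h4.le⟩)]
          exact hasDerivAt_of_eqOn_Icc h3 h4 E3 (hd3 s)
        · subst h4
          rw [G3 _ (mem_Icc.mpr ⟨h3.le, le_rfl⟩)]
          refine hasDerivAt_glue (c := 2 / (k:ℝ) + 1) (h34 hk) (by linarith) E3
            (fun x hx => E4 x (mem_Ici.mpr (mem_Icc.mp hx).1)) (hd3 _) ?_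
          rw [d34]; exact hd4 _
        · rw [G4 s (mem_Ici.mpr h4.le)]
          refine (hd4 s).congr_of_eventuallyEq ?_
          filter_upwards [Ioi_mem_nhds h4] with x hx
          exact E4 x (mem_Ici.mpr hx.le)

/-- Generic: piecewise function of matching continuous pieces is continuous. -/
lemma pcw_continuous (hk : 0 < k)
    (e01 : f0 (1 / (k:ℝ)) = f1 (1 / (k:ℝ)))
    (e12 : f1 (5 / (4 * (k:ℝ))) = f2 (5 / (4 * (k:ℝ))))
    (e23 : f2 (7 / (4 * (k:ℝ))) = f3 (7 / (4 * (k:ℝ))))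
    (e34 : f3 (2 / (k:ℝ)) = f4 (2 / (k:ℝ)))
    (c0 : Continuous f0) (c1 : Continuous f1) (c2 : Continuous f2)
    (c3 : Continuous f3) (c4 : Continuous f4) :
    Continuous (pcw k f0 f1 f2 f3 f4) := by
  rw [continuous_iff_continuousAt]
  intro s
  have E1 := pcw_eq1 (k := k) (f0 := f0) (f2 := f2) (f3 := f3) (f4 := f4) e01
  have E2 := pcw_eq2 (f0 := f0) (f3 := f3) (f4 := f4) hk e12
  have E3 := pcw_eq3 (f0 := f0) (f1 := f1) (f4 := f4) hk e23
  have E4 := pcw_eq4 (f0 := f0) (f1 := f1) (f2 := f2) hk e34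
  rcases lt_trichotomy s (1 / (k:ℝ)) with h1 | h1 | h1
  · refine c0.continuousAt.congr ?_
    filter_upwards [Iio_mem_nhds h1] with x hx
    exact (pcw_eq0 x (mem_Iic.mpr hx.le)).symm
  · subst h1
    exact continuousAt_glue (b := 1 / (k:ℝ) - 1) (by linarith) (h12 hk)
      (fun x hx => pcw_eq0 x (mem_Iic.mpr (mem_Icc.mp hx).2)) E1
      c0.continuousAt c1.continuousAt
  · rcases lt_trichotomy s (5 / (4 * (k:ℝ))) with h2 | h2 | h2
    · refine c1.continuousAt.congr ?_
      filter_upwards [Icc_mem_nhds h1 h2] with x hx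
      exact (E1 x hx).symm
    · subst h2
      exact continuousAt_glue (h12 hk) (h23 hk) E1 E2 c1.continuousAt c2.continuousAt
    · rcases lt_trichotomy s (7 / (4 * (k:ℝ))) with h3 | h3 | h3
      · refine c2.continuousAt.congr ?_
        filter_upwards [Icc_mem_nhds h2 h3] with x hx
        exact (E2 x hx).symm
      · subst h3
        exact continuousAt_glue (h23 hk) (h34 hk) E2 E3 c2.continuousAt c3.continuousAt
      · rcases lt_trichotomy s (2 / (k:ℝ)) with h4 | h4 | h4
        · refine c3.continuousAt.congr ?_
          filter_upwards [Icc_mem_nhds h3 h4] with x hx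
          exact (E3 x hx).symm
        · subst h4
          exact continuousAt_glue (c := 2 / (k:ℝ) + 1) (h34 hk) (by linarith) E3
            (fun x hx => E4 x (mem_Ici.mpr (mem_Icc.mp hx).1))
            c3.continuousAt c4.continuousAt
        · refine c4.continuousAt.congr ?_
          filter_upwards [Ioi_mem_nhds h4] with x hx
          exact (E4 x (mem_Ici.mpr hx.le)).symm

end generic

section pieces
variable (k : ℕ)

def P1 (x : ℝ) : ℝ := (8 * (k:ℝ) ^ 2 / 9) * (x - 1 / (k:ℝ)) ^ 3
def P2 (x : ℝ) : ℝ :=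
  (2 * (k:ℝ) / 3) * (x - 5 / (4 * (k:ℝ))) ^ 2
    + (1 / 6) * (x - 5 / (4 * (k:ℝ))) + 1 / (72 * (k:ℝ))
def P3 (x : ℝ) : ℝ := -(8 * (k:ℝ) ^ 2 / 9) * (x - 2 / (k:ℝ)) ^ 3 + x - 3 / (2 * (k:ℝ))
def P4 (x : ℝ) : ℝ := x - 3 / (2 * (k:ℝ))

def Q1 (x : ℝ) : ℝ := (8 * (k:ℝ) ^ 2 / 3) * (x - 1 / (k:ℝ)) ^ 2
def Q2 (x : ℝ) : ℝ := (4 * (k:ℝ) / 3) * (x - 5 / (4 * (k:ℝ))) + 1 / 6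
def Q3 (x : ℝ) : ℝ := -(8 * (k:ℝ) ^ 2 / 3) * (x - 2 / (k:ℝ)) ^ 2 + 1

def R1 (x : ℝ) : ℝ := (16 * (k:ℝ) ^ 2 / 3) * (x - 1 / (k:ℝ))
def R3 (x : ℝ) : ℝ := -(16 * (k:ℝ) ^ 2 / 3) * (x - 2 / (k:ℝ))

/-- first derivative of `psiPen` -/
def psi1 : ℝ → ℝ := pcw k (fun _ => 0) (Q1 k) (Q2 k) (Q3 k) (fun _ => 1)
/-- second derivative of `psiPen` -/
def psi2 : ℝ → ℝ :=
  pcw k (fun _ => 0) (R1 k) (fun _ => 4 * (k:ℝ) / 3) (R3 k) (fun _ => 0)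

lemma psiPen_eq : psiPen k = pcw k (fun _ => 0) (P1 k) (P2 k) (P3 k) (P4 k) := rfl

end pieces

section derivs
variable {k : ℕ}

lemma hdP1 (s : ℝ) : HasDerivAt (P1 k) (Q1 k s) s := by
  have h1 : HasDerivAt (fun x : ℝ => x - 1 / (k:ℝ)) 1 s := (hasDerivAt_id s).sub_const _
  have h := (h1.pow 3).const_mul (8 * (k:ℝ) ^ 2 / 9)
  refine h.congr_deriv ?_
  simp [Q1]; ring

lemma hdP2 (s : ℝ) : HasDerivAt (P2 k) (Q2 k s) s := by
  have h1 : HasDerivAt (fun x : ℝ => x - 5 / (4 * (k:ℝ))) 1 s := (hasDerivAt_id s).sub_const _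
  have h := (((h1.pow 2).const_mul (2 * (k:ℝ) / 3)).add (h1.const_mul (1 / 6))).add_const
    (1 / (72 * (k:ℝ)))
  refine h.congr_deriv ?_
  simp [Q2]; ring

lemma hdP3 (s : ℝ) : HasDerivAt (P3 k) (Q3 k s) s := by
  have h1 : HasDerivAt (fun x : ℝ => x - 2 / (k:ℝ)) 1 s := (hasDerivAt_id s).sub_const _
  have h := (((h1.pow 3).const_mul (-(8 * (k:ℝ) ^ 2 / 9))).add (hasDerivAt_id s)).sub_const
    (3 / (2 * (k:ℝ)))
  refine h.congr_deriv ?_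
  simp [Q3]; push_cast; ring

lemma hdP4 (s : ℝ) : HasDerivAt (P4 k) 1 s := by
  exact (hasDerivAt_id s).sub_const (3 / (2 * (k:ℝ)))

lemma hdQ1 (s : ℝ) : HasDerivAt (Q1 k) (R1 k s) s := by
  have h1 : HasDerivAt (fun x : ℝ => x - 1 / (k:ℝ)) 1 s := (hasDerivAt_id s).sub_const _
  have h := (h1.pow 2).const_mul (8 * (k:ℝ) ^ 2 / 3)
  refine h.congr_deriv ?_
  simp [R1]; ring

lemma hdQ2 (s : ℝ) : HasDerivAt (Q2 k) (4 * (k:ℝ) / 3) s := by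
  have h1 : HasDerivAt (fun x : ℝ => x - 5 / (4 * (k:ℝ))) 1 s := (hasDerivAt_id s).sub_const _
  have h := (h1.const_mul (4 * (k:ℝ) / 3)).add_const (1 / 6)
  refine h.congr_deriv ?_
  ring

lemma hdQ3 (s : ℝ) : HasDerivAt (Q3 k) (R3 k s) s := by
  have h1 : HasDerivAt (fun x : ℝ => x - 2 / (k:ℝ)) 1 s := (hasDerivAt_id s).sub_const _
  have h := ((h1.pow 2).const_mul (-(8 * (k:ℝ) ^ 2 / 3))).add_const 1
  refine h.congr_deriv ?_
  simp [R3]; push_cast; ring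

-- junction matching for the function values
lemma eP01 (hk : 0 < k) : (fun _ : ℝ => (0:ℝ)) (1 / (k:ℝ)) = P1 k (1 / (k:ℝ)) := by
  simp [P1]

lemma eP12 (hk : 0 < k) : P1 k (5 / (4 * (k:ℝ))) = P2 k (5 / (4 * (k:ℝ))) := by
  have hK := (hKpos hk).ne'
  simp only [P1, P2]
  field_simp
  ring

lemma eP23 (hk : 0 < k) : P2 k (7 / (4 * (k:ℝ))) = P3 k (7 / (4 * (k:ℝ))) := by
  have hK := (hKpos hk).ne'
  simp only [P2, P3]
  field_simp
  ring

lemma eP34 (hk : 0 < k) : P3 k (2 / (k:ℝ)) = P4 k (2 / (k:ℝ)) := by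
  simp [P3, P4]

lemma eQ01 (hk : 0 < k) : (fun _ : ℝ => (0:ℝ)) (1 / (k:ℝ)) = Q1 k (1 / (k:ℝ)) := by
  simp [Q1]

lemma eQ12 (hk : 0 < k) : Q1 k (5 / (4 * (k:ℝ))) = Q2 k (5 / (4 * (k:ℝ))) := by
  have hK := (hKpos hk).ne'
  simp only [Q1, Q2]
  field_simp
  ring

lemma eQ23 (hk : 0 < k) : Q2 k (7 / (4 * (k:ℝ))) = Q3 k (7 / (4 * (k:ℝ))) := by
  have hK := (hKpos hk).ne'
  simp only [Q2, Q3]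
  field_simp
  ring

lemma eQ34 (hk : 0 < k) : Q3 k (2 / (k:ℝ)) = (fun _ : ℝ => (1:ℝ)) (2 / (k:ℝ)) := by
  simp [Q3]

lemma eR01 (hk : 0 < k) : (fun _ : ℝ => (0:ℝ)) (1 / (k:ℝ)) = R1 k (1 / (k:ℝ)) := by
  simp [R1]

lemma eR12 (hk : 0 < k) :
    R1 k (5 / (4 * (k:ℝ))) = (fun _ : ℝ => 4 * (k:ℝ) / 3) (5 / (4 * (k:ℝ))) := by
  have hK := (hKpos hk).ne'
  simp only [R1]
  field_simp
  ring

lemma eR23 (hk : 0 < k) :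
    (fun _ : ℝ => 4 * (k:ℝ) / 3) (7 / (4 * (k:ℝ))) = R3 k (7 / (4 * (k:ℝ))) := by
  have hK := (hKpos hk).ne'
  simp only [R3]
  field_simp
  ring

lemma eR34 (hk : 0 < k) : R3 k (2 / (k:ℝ)) = (fun _ : ℝ => (0:ℝ)) (2 / (k:ℝ)) := by
  simp [R3]

lemma psiPen_hasDerivAt (hk : 0 < k) : ∀ s, HasDerivAt (psiPen k) (psi1 k s) s := by
  rw [psiPen_eq]
  exact pcw_hasDerivAt hk (eP01 hk) (eP12 hk) (eP23 hk) (eP34 hk)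
    (eQ01 hk) (eQ12 hk) (eQ23 hk) (eQ34 hk)
    (fun s => hasDerivAt_const s 0) hdP1 hdP2 hdP3 hdP4

lemma psi1_hasDerivAt (hk : 0 < k) : ∀ s, HasDerivAt (psi1 k) (psi2 k s) s :=
  pcw_hasDerivAt hk (eQ01 hk) (eQ12 hk) (eQ23 hk) (eQ34 hk)
    (eR01 hk) (eR12 hk) (eR23 hk) (eR34 hk)
    (fun s => hasDerivAt_const s 0) hdQ1 hdQ2 hdQ3 (fun s => hasDerivAt_const s 1)

lemma psi2_continuous (hk : 0 < k) : Continuous (psi2 k) :=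
  pcw_continuous hk (eR01 hk) (eR12 hk) (eR23 hk) (eR34 hk)
    continuous_const (by unfold R1; fun_prop) continuous_const (by unfold R3; fun_prop)
    continuous_const

end derivs

end Stmt12

open Stmt12 in
set_option maxHeartbeats 2000000 in
/-- For every `k ∈ ℕ`, `ψ_k` is `C²` on `ℝ` and satisfies
`|ψ_k(s)| · |ψ_k''(s)| ≤ (1/(2k)) · (4k/3) · 1_{[1/k,2/k]}(s) ≤ 1_{[1/k,2/k]}(s)`
for all `s ∈ ℝ`. -/
theorem statement12 (k : ℕ) (hk : 0 < k) :
    ContDiff ℝ 2 (psiPen k) ∧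
    ∀ s : ℝ,
      |psiPen k s| * |deriv (deriv (psiPen k)) s|
        ≤ (1 / (2 * (k : ℝ))) * (4 * (k : ℝ) / 3)
            * (Icc (1 / (k : ℝ)) (2 / (k : ℝ))).indicator (fun _ => (1:ℝ)) s ∧
      (1 / (2 * (k : ℝ))) * (4 * (k : ℝ) / 3)
            * (Icc (1 / (k : ℝ)) (2 / (k : ℝ))).indicator (fun _ => (1:ℝ)) s
        ≤ (Icc (1 / (k : ℝ)) (2 / (k : ℝ))).indicator (fun _ => (1:ℝ)) s := by
  have hK := hKpos hk
  have hK0 : ((k:ℝ)) ≠ 0 := hK.ne'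
  have D1 := psiPen_hasDerivAt hk
  have D2 := psi1_hasDerivAt hk
  have C2 := psi2_continuous hk
  have e1 : deriv (psiPen k) = psi1 k := funext fun s => (D1 s).deriv
  have e2 : deriv (psi1 k) = psi2 k := funext fun s => (D2 s).deriv
  constructor
  · rw [show (2 : WithTop ℕ∞) = 1 + 1 by norm_num]
    refine contDiff_succ_iff_deriv.mpr ⟨fun s => (D1 s).differentiableAt, ?_, ?_⟩
    · simp
    · rw [e1]
      exact contDiff_one_iff_deriv.mpr ⟨fun s => (D2 s).differentiableAt,
        by rw [e2]; exact C2⟩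
  · intro s
    rw [e1, e2]
    clear D1 D2 C2 e1 e2
    have hfac : (1 / (2 * (k:ℝ))) * (4 * (k:ℝ) / 3) = 2 / 3 := by field_simp; ring
    have hind0 : 0 ≤ (Icc (1 / (k:ℝ)) (2 / (k:ℝ))).indicator (fun _ => (1:ℝ)) s :=
      Set.indicator_nonneg (fun _ _ => zero_le_one) s
    refine ⟨?_, by rw [hfac]; linarith⟩
    rcases le_or_gt s (1 / (k:ℝ)) with h1 | h1
    · have hz : psiPen k s = 0 := by
        rw [psiPen_eq]
        exact pcw_eq0 s (mem_Iic.mpr h1)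
      rw [hz, abs_zero, zero_mul]
      exact mul_nonneg (by positivity) hind0
    · rcases le_or_gt s (2 / (k:ℝ)) with h4 | h4
      · have hmem : s ∈ Icc (1 / (k:ℝ)) (2 / (k:ℝ)) := ⟨h1.le, h4⟩
        rw [Set.indicator_of_mem hmem, mul_one, hfac]
        rcases le_or_gt s (5 / (4 * (k:ℝ))) with hA | hA
        · -- piece 1
          have hps : psiPen k s = P1 k s := by
            rw [psiPen_eq]
            exact pcw_eq1 (eP01 hk) s (mem_Icc.mpr ⟨h1.le, hA⟩)
          have hps2 : psi2 k s = R1 k s :=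
            pcw_eq1 (eR01 hk) s (mem_Icc.mpr ⟨h1.le, hA⟩)
          rw [hps, hps2]
          simp only [P1, R1]
          set t := s - 1 / (k:ℝ) with ht
          clear_value t
          have ht0 : 0 < t := by rw [ht]; linarith
          have hkt1 : (k:ℝ) * (1 / (k:ℝ)) = 1 := by field_simp
          have hks : (k:ℝ) * s ≤ 5 / 4 := by
            have : (k:ℝ) * s ≤ (k:ℝ) * (5 / (4 * (k:ℝ))) := by nlinarith
            have h2 : (k:ℝ) * (5 / (4 * (k:ℝ))) = 5 / 4 := by field_simp
            linarith
          have htu : (k:ℝ) * t ≤ 1 / 4 := by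
            have : (k:ℝ) * t = (k:ℝ) * s - (k:ℝ) * (1 / (k:ℝ)) := by rw [ht]; ring
            rw [this, hkt1]; linarith
          have htn : 0 ≤ (k:ℝ) * t := by positivity
          rw [abs_of_nonneg (mul_nonneg (by positivity) (le_of_lt (pow_pos ht0 3))),
            abs_of_nonneg (by nlinarith)]
          have key : (8 * (k:ℝ) ^ 2 / 9) * t ^ 3 * ((16 * (k:ℝ) ^ 2 / 3) * t)
              = (128 / 27) * ((k:ℝ) * t) ^ 4 := by ring
          have h4' : ((k:ℝ) * t) ^ 4 ≤ (1 / 4) ^ 4 := pow_le_pow_left₀ htn htu 4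
          rw [key]; nlinarith [h4']
        · rcases le_or_gt s (7 / (4 * (k:ℝ))) with hB | hB
          · -- piece 2
            have hps : psiPen k s = P2 k s := by
              rw [psiPen_eq]
              exact pcw_eq2 hk (eP12 hk) s (mem_Icc.mpr ⟨hA.le, hB⟩)
            have hps2 : psi2 k s = 4 * (k:ℝ) / 3 :=
              pcw_eq2 hk (eR12 hk) s (mem_Icc.mpr ⟨hA.le, hB⟩)
            rw [hps, hps2]
            simp only [P2]
            set u := s - 5 / (4 * (k:ℝ)) with hu
            clear_value u
            have hu0 : 0 < u := by rw [hu]; linarith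
            have hks : (k:ℝ) * s ≤ 7 / 4 := by
              have : (k:ℝ) * s ≤ (k:ℝ) * (7 / (4 * (k:ℝ))) := by nlinarith
              have h2 : (k:ℝ) * (7 / (4 * (k:ℝ))) = 7 / 4 := by field_simp
              linarith
            have hku : (k:ℝ) * u ≤ 1 / 2 := by
              have h2 : (k:ℝ) * (5 / (4 * (k:ℝ))) = 5 / 4 := by field_simp
              have : (k:ℝ) * u = (k:ℝ) * s - (k:ℝ) * (5 / (4 * (k:ℝ))) := by rw [hu]; ring
              rw [this, h2]; linarith
            have hkun : 0 ≤ (k:ℝ) * u := by positivity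
            have hψ0 : 0 ≤ 2 * (k:ℝ) / 3 * u ^ 2 + 1 / 6 * u + 1 / (72 * (k:ℝ)) := by
              have : (0:ℝ) < 1 / (72 * (k:ℝ)) := by positivity
              nlinarith [sq_nonneg u]
            rw [abs_of_nonneg hψ0, abs_of_nonneg (by positivity)]
            have hid : (2 * (k:ℝ) / 3 * u ^ 2 + 1 / 6 * u + 1 / (72 * (k:ℝ)))
                * (4 * (k:ℝ) / 3)
                = (8 / 9) * ((k:ℝ) * u) ^ 2 + (2 / 9) * ((k:ℝ) * u) + 1 / 54 := by
              field_simp; ring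
            have hsq : ((k:ℝ) * u) ^ 2 ≤ 1 / 4 := by nlinarith
            rw [hid]; nlinarith
          · -- piece 3
            have hps : psiPen k s = P3 k s := by
              rw [psiPen_eq]
              exact pcw_eq3 hk (eP23 hk) s (mem_Icc.mpr ⟨hB.le, h4⟩)
            have hps2 : psi2 k s = R3 k s :=
              pcw_eq3 hk (eR23 hk) s (mem_Icc.mpr ⟨hB.le, h4⟩)
            rw [hps, hps2]
            set v := s - 2 / (k:ℝ) with hv
            clear_value v
            have hexp : P3 k s = -(8 * (k:ℝ) ^ 2 / 9) * v ^ 3 + v + 1 / (2 * (k:ℝ)) := by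
              simp only [P3, ← hv]
              have : s = v + 2 / (k:ℝ) := by rw [hv]; ring
              rw [this]
              field_simp
              ring
            have hv0 : v ≤ 0 := by rw [hv]; linarith
            have hks : 7 / 4 < (k:ℝ) * s := by
              have : (k:ℝ) * (7 / (4 * (k:ℝ))) < (k:ℝ) * s := by
                exact mul_lt_mul_of_pos_left hB hK
              have h2 : (k:ℝ) * (7 / (4 * (k:ℝ))) = 7 / 4 := by field_simp
              linarith
            have hkv : -(1 / 4) ≤ (k:ℝ) * v := by
              have h2 : (k:ℝ) * (2 / (k:ℝ)) = 2 := by field_simp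
              have : (k:ℝ) * v = (k:ℝ) * s - (k:ℝ) * (2 / (k:ℝ)) := by rw [hv]; ring
              rw [this, h2]; linarith
            have hkv0 : (k:ℝ) * v ≤ 0 := by nlinarith
            have hsq : ((k:ℝ) * v) ^ 2 ≤ 1 / 16 := by nlinarith [hkv0]
            have hψub : P3 k s ≤ 1 / (2 * (k:ℝ)) := by
              rw [hexp]
              have hfact : v * (1 - (8 / 9) * ((k:ℝ) * v) ^ 2) ≤ 0 :=
                mul_nonpos_of_nonpos_of_nonneg hv0 (by nlinarith)
              nlinarith [hfact]
            have hψ0 : 0 ≤ P3 k s := by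
              rw [hexp]
              have h1' : 0 ≤ -(8 * (k:ℝ) ^ 2 / 9) * v ^ 3 := by nlinarith [sq_nonneg (k:ℝ), sq_nonneg v]
              have h2' : 0 < v + 1 / (2 * (k:ℝ)) := by
                have : 0 < (k:ℝ) * v + 1 / 2 := by linarith
                have h3' : (k:ℝ) * (v + 1 / (2 * (k:ℝ))) = (k:ℝ) * v + 1 / 2 := by
                  field_simp
                nlinarith
              linarith
            have hd0 : 0 ≤ R3 k s := by
              simp only [R3, ← hv]
              nlinarith [sq_nonneg (k:ℝ)]
            have hdub : R3 k s ≤ 4 * (k:ℝ) / 3 := by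
              simp only [R3, ← hv]
              nlinarith
            rw [abs_of_nonneg hψ0, abs_of_nonneg hd0, ← hfac]
            exact mul_le_mul hψub hdub hd0 (by positivity)
      · have hz : psi2 k s = 0 := pcw_eq4 hk (eR34 hk) s (mem_Ici.mpr h4.le)
        rw [hz, abs_zero, mul_zero]
        exact mul_nonneg (by positivity) hind0
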